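/- The cone of sums of squares in bounded degree is closed: let n, d be fixed and let (p_m) be a sequence of polynomials in ℝ[x_1,...,x_n], each of total degree at most 2d and each a sum of squares of polynomials. If there is a polynomial p such that for every monomial exponent α the coefficient of α in p_m converges to the coefficient of α in p as m → ∞, then p is a sum of squares of polynomials. -/

import Mathlib

open MvPolynomial Filter Topology

lemma sos_eq_zero {n : ℕ} {ι' : Type*} [Fintype ι'] {q : ι' → MvPolynomial (Fin n) ℝ}
    (h : ∑ i, (q i)^2 = 0) : ∀ i, q i = 0 := by
  intro i
  apply MvPolynomial.funext (q := 0)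
  intro x
  have hx : ∑ j, (eval x (q j))^2 = 0 := by
    have := congrArg (eval x) h
    simpa [map_sum] using this
  have h0 := (Finset.sum_eq_zero_iff_of_nonneg (fun j _ => sq_nonneg (eval x (q j)))).mp hx
    i (Finset.mem_univ i)
  have := pow_eq_zero_iff (n := 2) (by norm_num) |>.mp h0
  simpa using this

noncomputable def Phi (n : ℕ) : MvPolynomial (Fin n) ℝ →ₐ[ℝ] Polynomial (MvPolynomial (Fin n) ℝ) :=
  aeval (fun i => Polynomial.C (X i) * Polynomial.X)

lemma Phi_monomial {n : ℕ} (α : Fin n →₀ ℕ) (c : ℝ) :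
    Phi n (monomial α c) = Polynomial.C (monomial α c) * Polynomial.X ^ (α.sum fun _ e => e) := by
  rw [Phi, aeval_monomial]
  rw [Finsupp.prod, Finsupp.sum]
  simp only [mul_pow, Finset.prod_mul_distrib, ← map_pow, ← map_prod,
    Finset.prod_pow_eq_pow_sum]
  have : (algebraMap ℝ (Polynomial (MvPolynomial (Fin n) ℝ))) c = Polynomial.C (C c) := rfl
  rw [this, monomial_eq, Finsupp.prod, map_mul]
  ring

lemma coeff_Phi {n : ℕ} (q : MvPolynomial (Fin n) ℝ) (j : ℕ) (β : Fin n →₀ ℕ) :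
    coeff β ((Phi n q).coeff j) = if (β.sum fun _ e => e) = j then coeff β q else 0 := by
  induction q using MvPolynomial.induction_on' with
  | monomial α c =>
    rw [Phi_monomial, Polynomial.coeff_C_mul, Polynomial.coeff_X_pow]
    rcases eq_or_ne α β with rfl | hne
    · simp [coeff_monomial]
      split_ifs with h1 h2 h2 <;> simp_all [eq_comm]
    · split_ifs <;> simp_all [coeff_monomial, hne]
  | add p q hp hq =>
    rw [map_add, Polynomial.coeff_add, coeff_add, hp, hq, coeff_add]
    split_ifs <;> simp

lemma totalDegree_le_of_Phi {n dd : ℕ} (q : MvPolynomial (Fin n) ℝ)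
    (h : (Phi n q).natDegree ≤ dd) : q.totalDegree ≤ dd := by
  rw [totalDegree]
  apply Finset.sup_le
  intro α hα
  by_contra hgt
  push_neg at hgt
  have hz : (Phi n q).coeff (α.sum fun _ e => e) = 0 :=
    Polynomial.coeff_eq_zero_of_natDegree_lt (lt_of_le_of_lt h hgt)
  have := coeff_Phi q (α.sum fun _ e => e) α
  rw [hz, if_pos rfl] at this
  exact (MvPolynomial.mem_support_iff.mp hα) this.symm

lemma natDegree_Phi_le {n : ℕ} (q : MvPolynomial (Fin n) ℝ) :
    (Phi n q).natDegree ≤ q.totalDegree := by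
  apply Polynomial.natDegree_le_iff_coeff_eq_zero.mpr
  intro j hj
  apply MvPolynomial.ext
  intro β
  rw [coeff_Phi, coeff_zero]
  split_ifs with h
  · apply MvPolynomial.notMem_support_iff.mp
    intro hmem
    exact absurd (le_totalDegree hmem) (by omega)
  · rfl
lemma natDegree_le_of_sum_sq {n k dd : ℕ} (f : Fin k → Polynomial (MvPolynomial (Fin n) ℝ))
    (h : (∑ i, (f i)^2).natDegree ≤ 2*dd) : ∀ i, (f i).natDegree ≤ dd := by
  by_contra hcon
  push_neg at hcon
  obtain ⟨i₁, hi₁⟩ := hcon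
  set D := Finset.univ.sup (fun i => (f i).natDegree) with hDdef
  have hD : dd < D := lt_of_lt_of_le hi₁ (Finset.le_sup (f := fun i => (f i).natDegree) (Finset.mem_univ i₁))
  obtain ⟨i₀, -, hi₀⟩ := Finset.exists_mem_eq_sup Finset.univ ⟨i₁, Finset.mem_univ i₁⟩
    (fun i => (f i).natDegree)
  rw [← hDdef] at hi₀
  -- coeff of 2D in each square
  have hcoeff : ∀ i, ((f i)^2).coeff (2*D) = ((f i).coeff D)^2 := by
    intro i
    rw [sq, Polynomial.coeff_mul]
    rw [Finset.sum_eq_single_of_mem (D, D) (Finset.HasAntidiagonal.mem_antidiagonal.mpr (two_mul D).symm)]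
    · rw [sq]
    · rintro ⟨a, b⟩ hab hne
      have hab' := Finset.HasAntidiagonal.mem_antidiagonal.mp hab
      have hle : (f i).natDegree ≤ D := Finset.le_sup (f := fun i => (f i).natDegree) (Finset.mem_univ i)
      rcases lt_trichotomy a D with h1 | rfl | h1
      · have : D < b := by omega
        rw [Polynomial.coeff_eq_zero_of_natDegree_lt (lt_of_le_of_lt hle this), mul_zero]
      · exact absurd (by omega : b = D) (by simpa using hne)
      · rw [Polynomial.coeff_eq_zero_of_natDegree_lt (lt_of_le_of_lt hle h1), zero_mul]
  have hzero : (∑ i, (f i)^2).coeff (2*D) = 0 :=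
    Polynomial.coeff_eq_zero_of_natDegree_lt (lt_of_le_of_lt h (by omega))
  rw [Polynomial.finset_sum_coeff] at hzero
  simp_rw [hcoeff] at hzero
  have hlead := sos_eq_zero hzero i₀
  have hne : f i₀ ≠ 0 := by
    intro h0
    rw [h0] at hi₀
    simp at hi₀
    omega
  rw [hi₀] at hlead
  exact hne (Polynomial.leadingCoeff_eq_zero.mp hlead)

lemma totalDegree_le_of_sum_sq {n k dd : ℕ} (q : Fin k → MvPolynomial (Fin n) ℝ)
    (h : (∑ i, (q i)^2).totalDegree ≤ 2*dd) : ∀ i, (q i).totalDegree ≤ dd := by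
  intro i
  apply totalDegree_le_of_Phi
  apply natDegree_le_of_sum_sq (f := fun i => Phi n (q i))
  have : ∑ j, (Phi n (q j))^2 = Phi n (∑ j, (q j)^2) := by
    rw [map_sum]; simp [map_pow]
  rw [this]
  exact le_trans (natDegree_Phi_le _) h

noncomputable def Tmon (n d : ℕ) : Finset (Fin n →₀ ℕ) :=
  Finset.filter (fun α => (α.sum fun _ e => e) ≤ d)
    (Finset.Iic (Finsupp.equivFunOnFinite.symm fun _ => d))

lemma mem_Tmon {n d : ℕ} {α : Fin n →₀ ℕ} :
    α ∈ Tmon n d ↔ (α.sum fun _ e => e) ≤ d := by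
  unfold Tmon
  rw [Finset.mem_filter, Finset.mem_Iic]
  constructor
  · exact fun h => h.2
  · intro h
    refine ⟨?_, h⟩
    intro i
    have h1 : α i ≤ α.sum fun _ e => e := by
      rcases eq_or_ne (α i) 0 with h0 | h0
      · simp [h0]
      · exact Finset.single_le_sum (f := fun i => α i) (fun _ _ => Nat.zero_le _)
          (Finsupp.mem_support_iff.mpr h0)
    exact le_trans h1 h

abbrev Imon (n d : ℕ) := {α : Fin n →₀ ℕ // α ∈ Tmon n d}

noncomputable def Qpoly {n d : ℕ} (c : Imon n d → ℝ) : MvPolynomial (Fin n) ℝ :=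
  ∑ α : Imon n d, monomial (α : Fin n →₀ ℕ) (c α)

noncomputable def Pmat {n d : ℕ} (G : Imon n d → Imon n d → ℝ) : MvPolynomial (Fin n) ℝ :=
  ∑ α : Imon n d, ∑ β : Imon n d, monomial ((α : Fin n →₀ ℕ) + (β : Fin n →₀ ℕ)) (G α β)

lemma coeff_Qpoly {n d : ℕ} (c : Imon n d → ℝ) (α : Imon n d) :
    coeff (α : Fin n →₀ ℕ) (Qpoly c) = c α := by
  unfold Qpoly
  rw [coeff_sum]
  rw [Finset.sum_eq_single α]
  · simp [coeff_monomial]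
  · intro b _ hb
    rw [coeff_monomial, if_neg (fun h => hb (Subtype.ext h))]
  · simp

lemma Qpoly_coeff_eq {n d : ℕ} (q : MvPolynomial (Fin n) ℝ) (hq : q.totalDegree ≤ d) :
    Qpoly (n := n) (d := d) (fun α => coeff (α : Fin n →₀ ℕ) q) = q := by
  unfold Qpoly
  rw [Finset.sum_coe_sort (Tmon n d) (fun α => monomial α (coeff α q))]
  conv_rhs => rw [q.as_sum]
  refine (Finset.sum_subset ?_ ?_).symm
  · intro α hα
    exact mem_Tmon.mpr (le_trans (le_totalDegree hα) hq)
  · intro α _ hα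
    rw [MvPolynomial.notMem_support_iff.mp hα, map_zero]

lemma sum_sq_Qpoly {n d : ℕ} {ι' : Type*} [Fintype ι'] (c : ι' → Imon n d → ℝ) :
    ∑ j, (Qpoly (c j))^2 = Pmat (fun α β => ∑ j, c j α * c j β) := by
  unfold Qpoly Pmat
  have h1 : ∀ j : ι', (∑ α : Imon n d, monomial (α : Fin n →₀ ℕ) (c j α))^2
      = ∑ α : Imon n d, ∑ β : Imon n d,
          monomial ((α : Fin n →₀ ℕ) + (β : Fin n →₀ ℕ)) (c j α * c j β) := by
    intro j
    rw [sq, Finset.sum_mul_sum]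
    refine Finset.sum_congr rfl fun α _ => Finset.sum_congr rfl fun β _ => ?_
    rw [monomial_mul]
  simp_rw [h1, map_sum (monomial _)]
  rw [Finset.sum_comm]
  exact Finset.sum_congr rfl fun α _ => Finset.sum_comm

lemma coeff_Pmat {n d : ℕ} (γ : Fin n →₀ ℕ) (G : Imon n d → Imon n d → ℝ) :
    coeff γ (Pmat G) = ∑ α : Imon n d, ∑ β : Imon n d,
      if (α : Fin n →₀ ℕ) + (β : Fin n →₀ ℕ) = γ then G α β else 0 := by
  unfold Pmat
  rw [coeff_sum]
  exact Finset.sum_congr rfl fun α _ => by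
    rw [coeff_sum]
    exact Finset.sum_congr rfl fun β _ => coeff_monomial _ _ _

lemma cont_coeff_Pmat {n d : ℕ} (γ : Fin n →₀ ℕ) :
    Continuous (fun G : Imon n d → Imon n d → ℝ => coeff γ (Pmat G)) := by
  simp only [coeff_Pmat]
  refine continuous_finset_sum _ fun α _ => continuous_finset_sum _ fun β _ => ?_
  by_cases h : (α : Fin n →₀ ℕ) + (β : Fin n →₀ ℕ) = γ
  · simpa [h, Function.comp_def] using (continuous_apply β).comp (continuous_apply (A := fun _ : Imon n d => Imon n d → ℝ) α)
  · simpa [h] using continuous_const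

noncomputable def qform {n d : ℕ} (G : Imon n d → Imon n d → ℝ) (x : Imon n d → ℝ) : ℝ :=
  ∑ α, x α * ∑ β, G α β * x β

lemma qform_gram {n d : ℕ} {ι' : Type*} [Fintype ι'] (c : ι' → Imon n d → ℝ) (x : Imon n d → ℝ) :
    qform (fun α β => ∑ j, c j α * c j β) x = ∑ j, (∑ α, x α * c j α)^2 := by
  unfold qform
  simp only [sq, Finset.sum_mul_sum, Finset.sum_mul, Finset.mul_sum]
  have h1 : ∀ α : Imon n d, ∑ β : Imon n d, ∑ j : ι', x α * (c j α * c j β * x β)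
      = ∑ j : ι', ∑ β : Imon n d, x α * (c j α * c j β * x β) := fun α => Finset.sum_comm
  simp_rw [h1]
  rw [Finset.sum_comm]
  refine Finset.sum_congr rfl fun j _ => ?_
  rw [Finset.sum_comm]
  exact Finset.sum_congr rfl fun β _ => Finset.sum_congr rfl fun α _ => by ring

lemma qform_smul {n d : ℕ} (t : ℝ) (G : Imon n d → Imon n d → ℝ) (x : Imon n d → ℝ) :
    qform (t • G) x = t * qform G x := by
  unfold qform
  rw [Finset.mul_sum]
  refine Finset.sum_congr rfl fun α _ => ?_
  simp only [Pi.smul_apply, smul_eq_mul, Finset.mul_sum]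
  exact Finset.sum_congr rfl fun β _ => by ring

lemma coeff_Pmat_smul {n d : ℕ} (γ : Fin n →₀ ℕ) (t : ℝ) (G : Imon n d → Imon n d → ℝ) :
    coeff γ (Pmat (t • G)) = t * coeff γ (Pmat G) := by
  rw [coeff_Pmat, coeff_Pmat, Finset.mul_sum]
  refine Finset.sum_congr rfl fun α _ => ?_
  rw [Finset.mul_sum]
  refine Finset.sum_congr rfl fun β _ => ?_
  split_ifs <;> simp

lemma cont_qform {n d : ℕ} (x : Imon n d → ℝ) :
    Continuous (fun G : Imon n d → Imon n d → ℝ => qform G x) := by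
  unfold qform
  refine continuous_finset_sum _ fun α _ => Continuous.mul continuous_const ?_
  refine continuous_finset_sum _ fun β _ => Continuous.mul ?_ continuous_const
  exact (continuous_apply β).comp (continuous_apply (A := fun _ : Imon n d => Imon n d → ℝ) α)

lemma posSemidef_of_qform {n d : ℕ} (H : Imon n d → Imon n d → ℝ)
    (hsymm : ∀ α β, H α β = H β α) (hq : ∀ x, 0 ≤ qform H x) :
    (Matrix.of H).PosSemidef := by
  rw [Matrix.posSemidef_iff_dotProduct_mulVec]
  constructor
  · apply Matrix.ext
    intro α β
    rw [Matrix.conjTranspose_apply]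
    simpa using hsymm β α
  · intro x
    have hx : star x = x := by funext i; exact star_trivial _
    have hd : dotProduct x ((Matrix.of H).mulVec x) = qform H x := by
      simp [dotProduct, Matrix.mulVec, qform]
    rw [hx, hd]
    exact hq x

lemma sos_of_posSemidef {n d : ℕ} (H : Imon n d → Imon n d → ℝ)
    (hpsd : (Matrix.of H).PosSemidef) :
    ∃ B : Imon n d → Imon n d → ℝ, (∀ α β, H α β = ∑ j, B j α * B j β) := by
  classical
  open scoped MatrixOrder Matrix.Norms.L2Operator in
  obtain ⟨B, hB⟩ := CStarAlgebra.nonneg_iff_eq_star_mul_self.mp hpsd.nonneg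
  refine ⟨fun j α => B j α, fun α β => ?_⟩
  have := congrFun (congrFun hB α) β
  simpa [Matrix.mul_apply, Matrix.star_eq_conjTranspose, Matrix.conjTranspose_apply] using this

lemma good_limit {n d : ℕ} (Gs : ℕ → Imon n d → Imon n d → ℝ) (H : Imon n d → Imon n d → ℝ)
    (hlim : Tendsto Gs atTop (𝓝 H))
    (hs : ∀ j α β, Gs j α β = Gs j β α) (hq : ∀ j x, 0 ≤ qform (Gs j) x) :
    (Matrix.of H).PosSemidef := by
  have hent : ∀ α β, Tendsto (fun j => Gs j α β) atTop (𝓝 (H α β)) := fun α β =>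
    (((continuous_apply β).comp
      (continuous_apply (A := fun _ : Imon n d => Imon n d → ℝ) α)).tendsto H).comp hlim
  apply posSemidef_of_qform
  · intro α β
    refine tendsto_nhds_unique (hent α β) ((hent β α).congr fun j => ?_)
    exact (hs j β α)
  · intro x
    exact ge_of_tendsto (((cont_qform x).tendsto H).comp hlim)
      (Filter.Eventually.of_forall fun j => hq j x)

lemma final_of_psd {n d : ℕ} (p : MvPolynomial (Fin n) ℝ) (H : Imon n d → Imon n d → ℝ)
    (hpsd : (Matrix.of H).PosSemidef) (hp : p = Pmat H) :
    ∃ (k : ℕ) (q : Fin k → MvPolynomial (Fin n) ℝ), p = ∑ i, (q i) ^ 2 := by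
  obtain ⟨B, hB⟩ := sos_of_posSemidef H hpsd
  have hHeq : H = fun α β => ∑ j, B j α * B j β := funext fun α => funext fun β => hB α β
  have hsum : Pmat H = ∑ j : Imon n d, (Qpoly (fun α => B j α))^2 := by
    rw [sum_sq_Qpoly]
    exact congrArg Pmat hHeq
  refine ⟨Fintype.card (Imon n d),
    fun i => Qpoly (fun α => B ((Fintype.equivFin (Imon n d)).symm i) α), ?_⟩
  rw [hp, hsum, ← Equiv.sum_comp (Fintype.equivFin (Imon n d)).symm
    (fun j => (Qpoly (fun α => B j α))^2)]

/-- The cone of sums of squares of bounded degree is closed: a coefficientwise limit of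
sums of squares of total degree at most `2d` is a sum of squares. -/
theorem sos_cone_isClosed {n d : ℕ} (pm : ℕ → MvPolynomial (Fin n) ℝ)
    (hdeg : ∀ m, (pm m).totalDegree ≤ 2 * d)
    (hsos : ∀ m, ∃ (k : ℕ) (q : Fin k → MvPolynomial (Fin n) ℝ), pm m = ∑ i, (q i) ^ 2)
    (p : MvPolynomial (Fin n) ℝ)
    (hconv : ∀ α : Fin n →₀ ℕ,
      Tendsto (fun m => coeff α (pm m)) atTop (𝓝 (coeff α p))) :
    ∃ (k : ℕ) (q : Fin k → MvPolynomial (Fin n) ℝ), p = ∑ i, (q i) ^ 2 := by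
  classical
  have hGm : ∀ m, ∃ G : Imon n d → Imon n d → ℝ,
      pm m = Pmat G ∧ (∀ α β, G α β = G β α) ∧ (∀ x, 0 ≤ qform G x) := by
    intro m
    obtain ⟨k, q, hrep⟩ := hsos m
    have hdq : ∀ i, (q i).totalDegree ≤ d := by
      apply totalDegree_le_of_sum_sq
      rw [← hrep]; exact hdeg m
    refine ⟨fun α β => ∑ i, coeff (α : Fin n →₀ ℕ) (q i) * coeff (β : Fin n →₀ ℕ) (q i),
      ?_, ?_, ?_⟩
    · rw [hrep]
      have h2 : ∑ i, (q i)^2 = ∑ i, (Qpoly (fun α => coeff (α : Fin n →₀ ℕ) (q i)))^2 :=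
        Finset.sum_congr rfl fun i _ => by rw [Qpoly_coeff_eq _ (hdq i)]
      rw [h2]
      exact sum_sq_Qpoly _
    · intro α β; exact Finset.sum_congr rfl fun i _ => mul_comm _ _
    · intro x
      rw [qform_gram]
      exact Finset.sum_nonneg fun j _ => sq_nonneg _
  choose Gm hPm hsymm hqf using hGm
  by_cases hbd : ∃ R : ℝ, ∃ᶠ m in atTop, ‖Gm m‖ ≤ R
  · obtain ⟨R, hR⟩ := hbd
    obtain ⟨φ, hφmono, hφ⟩ := extraction_of_frequently_atTop hR
    have hcpt : IsCompact (Metric.closedBall (0 : Imon n d → Imon n d → ℝ) R) :=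
      isCompact_closedBall _ _
    obtain ⟨H, -, ψ, hψmono, hψ⟩ := hcpt.tendsto_subseq
      (x := fun j => Gm (φ j)) (fun j => mem_closedBall_zero_iff.mpr (hφ j))
    have hψ' : Tendsto (fun j => Gm (φ (ψ j))) atTop (𝓝 H) := hψ
    have hm' : Tendsto (fun j => φ (ψ j)) atTop atTop := (hφmono.comp hψmono).tendsto_atTop
    have hpsd := good_limit _ H hψ' (fun j => hsymm (φ (ψ j))) (fun j => hqf (φ (ψ j)))
    apply final_of_psd p H hpsd
    apply MvPolynomial.ext
    intro γ
    have h1 : Tendsto (fun j => coeff γ (pm (φ (ψ j)))) atTop (𝓝 (coeff γ (Pmat H))) := by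
      have h := ((cont_coeff_Pmat γ).tendsto H).comp hψ'
      refine h.congr fun j => ?_
      simp only [Function.comp_apply]
      rw [← hPm]
    have h2 : Tendsto (fun j => coeff γ (pm (φ (ψ j)))) atTop (𝓝 (coeff γ p)) :=
      (hconv γ).comp hm'
    exact tendsto_nhds_unique h2 h1
  · push_neg at hbd
    have hinf : Tendsto (fun m => ‖Gm m‖) atTop atTop := by
      rw [tendsto_atTop]
      intro b
      have hb := hbd b
      filter_upwards [hb] with m hm
      exact hm.le
    obtain ⟨m₀, hm₀⟩ := eventually_atTop.mp (hinf.eventually_ge_atTop 1)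
    set Hs : ℕ → Imon n d → Imon n d → ℝ :=
      fun j => ‖Gm (j + m₀)‖⁻¹ • Gm (j + m₀) with hHs
    have hnorm1 : ∀ j, ‖Hs j‖ = 1 := by
      intro j
      have h1 : (1 : ℝ) ≤ ‖Gm (j + m₀)‖ := hm₀ _ (Nat.le_add_left _ _)
      have h0 : ‖Gm (j + m₀)‖ ≠ 0 := by linarith
      simp only [hHs, norm_smul, norm_inv, norm_norm]
      field_simp
    have hcpt : IsCompact (Metric.closedBall (0 : Imon n d → Imon n d → ℝ) 1) :=
      isCompact_closedBall _ _
    obtain ⟨H, -, ψ, hψmono, hψ⟩ := hcpt.tendsto_subseq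
      (x := Hs) (fun j => mem_closedBall_zero_iff.mpr (hnorm1 j).le)
    have hψ' : Tendsto (fun j => Hs (ψ j)) atTop (𝓝 H) := hψ
    have hHnorm : ‖H‖ = 1 := by
      have hn : Tendsto (fun j => ‖Hs (ψ j)‖) atTop (𝓝 ‖H‖) :=
        (continuous_norm.tendsto H).comp hψ'
      have hc : Tendsto (fun j => ‖Hs (ψ j)‖) atTop (𝓝 1) := by
        simp only [hnorm1]; exact tendsto_const_nhds
      exact tendsto_nhds_unique hn hc
    have hgood := good_limit _ H hψ'
      (fun j α β => by
        simp only [hHs, Pi.smul_apply, smul_eq_mul]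
        rw [hsymm])
      (fun j x => by
        simp only [hHs]
        rw [qform_smul]
        exact mul_nonneg (inv_nonneg.mpr (norm_nonneg _)) (hqf _ x))
    have hP0 : Pmat H = 0 := by
      apply MvPolynomial.ext
      intro γ
      have hincr : Tendsto (fun j => ψ j + m₀) atTop atTop :=
        tendsto_atTop_mono (fun j => Nat.le_add_right (ψ j) m₀) hψmono.tendsto_atTop
      have htend0 : Tendsto (fun j => coeff γ (Pmat (Hs (ψ j)))) atTop (𝓝 0) := by
        have heq : (fun j => coeff γ (Pmat (Hs (ψ j)))) =
            fun j => ‖Gm (ψ j + m₀)‖⁻¹ * coeff γ (pm (ψ j + m₀)) := by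
          funext j
          simp only [hHs]
          rw [coeff_Pmat_smul, ← hPm]
        rw [heq]
        have hc : Tendsto (fun j => ‖Gm (ψ j + m₀)‖⁻¹) atTop (𝓝 0) :=
          tendsto_inv_atTop_zero.comp (hinf.comp hincr)
        have hcc : Tendsto (fun j => coeff γ (pm (ψ j + m₀))) atTop (𝓝 (coeff γ p)) :=
          (hconv γ).comp hincr
        simpa using hc.mul hcc
      have hPH : Tendsto (fun j => coeff γ (Pmat (Hs (ψ j)))) atTop (𝓝 (coeff γ (Pmat H))) :=
        ((cont_coeff_Pmat γ).tendsto H).comp hψ'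
      simpa using tendsto_nhds_unique hPH htend0
    exfalso
    obtain ⟨B, hB⟩ := sos_of_posSemidef H hgood
    have hHeq : H = fun α β => ∑ j, B j α * B j β := funext fun α => funext fun β => hB α β
    have hzero : ∑ j : Imon n d, (Qpoly (fun α => B j α))^2 = 0 := by
      rw [sum_sq_Qpoly, ← congrArg Pmat hHeq, hP0]
    have hq0 := sos_eq_zero hzero
    have hB0 : ∀ j α, B j α = 0 := by
      intro j α
      have h := congrArg (coeff (α : Fin n →₀ ℕ)) (hq0 j)
      rwa [coeff_Qpoly, coeff_zero] at h
    have hH0 : H = 0 := by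
      funext α β
      rw [hB α β]
      simp [hB0]
    rw [hH0] at hHnorm
    simp at hHnorm
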